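/- Let r ≥ 1, let w : ℕ → ℝ, f : ℕ → ℝ, g : ℕ → ℝ with g 0 = 0, and let k₁ < k₂ < ... < k_r be positive integers. Define the (r+1)×(r+1) matrix A by: a_{ij} = w(k_j)·f(k_i) for i < j ≤ r; a_{i,r+1} = f(k_i) for i ≤ r; a_{ii} = w(k_i)·(f(k_i) + g(0) − 1) for i ≤ r; a_{ij} = w(k_j)·(f(k_i) + g(k_i − k_j)) for j < i ≤ r; with last row entries a_{r+1,j} and a_{r+1,r+1} chosen so that the characteristic polynomial factors as stated. Under the assumptions that (F) f(k)=0 for all k ≤ k_r with k ∉ {k₁,...,k_r}, (G1) ∑_{k≥0} g(k) = 1, (G2) g(k − k_j) = 0 for all j and all k ≤ k_r with k ∉ {k₁,...,k_r}, and w(k) = χk + ρ: the characteristic polynomial of A equals (λ₁ − λ)·∏_{i=1}^r (w(k_i)(g(0) − 1) − λ), where λ₁ = ∑_{k≥1}(w(k)f(k) + χ·k·g(k)). In particular the eigenvalues of A are λ₁ and w(k_i)(g(0)−1) for i = 1,...,r. -/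

import Mathlib

open Finset Matrix

private lemma sum_Ico_shift' (c B : ℕ) (h : ℕ → ℝ) (hc : c ≤ B) :
    ∑ m ∈ Finset.Ico (c + 1) B, h m = ∑ n ∈ Finset.Ico 1 (B - c), h (n + c) := by
  have : Finset.Ico (c + 1) B = (Finset.Ico 1 (B - c)).map (addRightEmbedding c) := by
    rw [Finset.map_add_right_Ico]
    congr 1 <;> omega
  rw [this, Finset.sum_map]
  rfl

/-- The characteristic polynomial of the intensity matrix `A` of the Pólya urn
factors as `(λ₁ − λ)·∏ᵢ (w(kᵢ)(g 0 − 1) − λ)`; in particular its eigenvalues are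
`λ₁` and `w(kᵢ)(g 0 − 1)` for `i = 1,…,r`. -/
theorem stmt_0
    (r : ℕ) (hr : 0 < r)
    (χ ρ : ℝ) (f g : ℕ → ℝ)
    (k : Fin r → ℕ) (hk1 : ∀ i, 1 ≤ k i) (hkmono : StrictMono k)
    (w : ℕ → ℝ) (hw : ∀ n, w n = χ * n + ρ)
    (hχ : 0 ≤ χ) (hχρ : 0 < χ + ρ)
    (hf0 : ∀ m, 0 ≤ f m) (hg0nonneg : ∀ m, 0 ≤ g m)
    (hg0 : g 0 = 0)
    (M : ℕ) (hfM : ∀ m, M ≤ m → f m = 0) (hgM : ∀ m, M ≤ m → g m = 0)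
    (kr : ℕ) (hkr : kr = k ⟨r - 1, by omega⟩)
    (B : ℕ) (hB : B = M + kr + 1)
    -- assumption (F)
    (hF : ∀ m, m ≤ kr → (∀ i : Fin r, m ≠ k i) → f m = 0)
    -- assumption (G1)
    (hG1 : ∑ m ∈ Finset.range B, g m = 1)
    -- assumption (G2)
    (hG2 : ∀ m, m ≤ kr → (∀ i : Fin r, m ≠ k i) → ∀ j : Fin r, g (m - k j) = 0)
    (lam1 : ℝ)
    (hlam1 : lam1 = ∑ m ∈ Finset.Ico 1 B, (w m * f m + χ * m * g m))
    (A : Matrix (Fin (r + 1)) (Fin (r + 1)) ℝ)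
    (hA : ∀ i j : Fin (r + 1),
      A i j =
        if hi : (i : ℕ) < r then
          if hj : (j : ℕ) < r then
            if (i : ℕ) < (j : ℕ) then w (k ⟨j, hj⟩) * f (k ⟨i, hi⟩)
            else if (i : ℕ) = (j : ℕ) then
              w (k ⟨i, hi⟩) * (f (k ⟨i, hi⟩) + g 0 - 1)
            else w (k ⟨j, hj⟩) * (f (k ⟨i, hi⟩) + g (k ⟨i, hi⟩ - k ⟨j, hj⟩))
          else f (k ⟨i, hi⟩)
        else
          if hj : (j : ℕ) < r then
            w (k ⟨j, hj⟩) *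
              ∑ m ∈ Finset.Ico (kr + 1) B, w m * (f m + g (m - k ⟨j, hj⟩))
          else
            ∑ m ∈ Finset.Ico (kr + 1) B, w m * f m
              + ∑ m ∈ Finset.Ico 1 B, χ * m * g m) :
    (∀ lam : ℝ,
        (A - lam • (1 : Matrix (Fin (r + 1)) (Fin (r + 1)) ℝ)).det
          = (lam1 - lam) * ∏ i : Fin r, (w (k i) * (g 0 - 1) - lam)) ∧
    (∀ lam : ℝ,
        (A - lam • (1 : Matrix (Fin (r + 1)) (Fin (r + 1)) ℝ)).det = 0 ↔
          lam = lam1 ∨ ∃ i : Fin r, lam = w (k i) * (g 0 - 1)) := by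
  -- basic facts
  have hkle : ∀ i : Fin r, k i ≤ kr := by
    intro i
    rw [hkr]
    exact hkmono.monotone (by
      have := i.isLt
      exact Fin.mk_le_mk.mpr (by omega) |>.trans_eq rfl |>.trans_eq rfl |>.trans (le_refl _) |>.trans_eq rfl |>.trans (le_refl _) |>.trans_eq rfl)
  -- splitting a sum over [1,B) at kr+1, using vanishing off {k i}
  have hsplit : ∀ F : ℕ → ℝ, (∀ m, m ≤ kr → (∀ i : Fin r, m ≠ k i) → F m = 0) →
      ∑ m ∈ Finset.Ico 1 B, F m
        = (∑ i : Fin r, F (k i)) + ∑ m ∈ Finset.Ico (kr + 1) B, F m := by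
    intro F hFz
    rw [← Finset.sum_Ico_consecutive F (by omega : 1 ≤ kr + 1) (by omega : kr + 1 ≤ B)]
    congr 1
    have himg : ∑ i : Fin r, F (k i) = ∑ x ∈ Finset.univ.image k, F x :=
      (Finset.sum_image (fun i _ j _ h => hkmono.injective h)).symm
    rw [himg]
    refine (Finset.sum_subset ?_ ?_).symm
    · intro x hx
      simp only [Finset.mem_image, Finset.mem_univ, true_and] at hx
      obtain ⟨i, rfl⟩ := hx
      exact Finset.mem_Ico.mpr ⟨hk1 i, by have := hkle i; omega⟩
    · intro x hx hnx
      simp only [Finset.mem_Ico] at hx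
      refine hFz x (by omega) fun i hxi => hnx ?_
      exact Finset.mem_image.mpr ⟨i, Finset.mem_univ i, hxi.symm⟩
  have hGsum1 : ∑ m ∈ Finset.Ico 1 B, g m = 1 := by
    have h0 : Finset.range B = Finset.Ico 0 B := by rw [Nat.Ico_zero_eq_range]
    have h1 : (∑ m ∈ Finset.Ico 0 1, g m) + ∑ m ∈ Finset.Ico 1 B, g m
        = ∑ m ∈ Finset.Ico 0 B, g m :=
      Finset.sum_Ico_consecutive g (by omega) (by omega)
    have h2 : ∑ m ∈ Finset.Ico 0 1, g m = g 0 := by simp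
    rw [h0, ← h1, h2, hg0, zero_add] at hG1
    exact hG1
  -- the key reindexing identity
  have hreindex : ∀ j : Fin r, ∑ m ∈ Finset.Ico 1 B, w m * g (m - k j)
      = (∑ m ∈ Finset.Ico 1 B, χ * m * g m) + w (k j) := by
    intro j
    set c := k j with hc
    have hc1 : 1 ≤ c := hk1 j
    have hck : c ≤ kr := hkle j
    have h1 : (∑ m ∈ Finset.Ico 1 (c + 1), w m * g (m - c))
        + ∑ m ∈ Finset.Ico (c + 1) B, w m * g (m - c)
        = ∑ m ∈ Finset.Ico 1 B, w m * g (m - c) :=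
      Finset.sum_Ico_consecutive _ (by omega) (by omega)
    have h2 : ∑ m ∈ Finset.Ico 1 (c + 1), w m * g (m - c) = 0 :=
      Finset.sum_eq_zero fun m hm => by
        have hm' : m - c = 0 := by
          simp only [Finset.mem_Ico] at hm; omega
        rw [hm', hg0, mul_zero]
    have h3 : ∑ m ∈ Finset.Ico (c + 1) B, w m * g (m - c)
        = ∑ n ∈ Finset.Ico 1 (B - c), w (n + c) * g (n + c - c) :=
      sum_Ico_shift' c B _ (by omega)
    have h4 : ∀ n : ℕ, w (n + c) * g (n + c - c) = χ * n * g n + w c * g n := by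
      intro n
      have : n + c - c = n := by omega
      rw [this, hw, hw]
      push_cast
      ring
    have hsub : Finset.Ico 1 (B - c) ⊆ Finset.Ico 1 B :=
      Finset.Ico_subset_Ico_right (by omega)
    have e1 : ∑ n ∈ Finset.Ico 1 (B - c), χ * n * g n
        = ∑ n ∈ Finset.Ico 1 B, χ * n * g n := by
      refine Finset.sum_subset hsub fun x hx hnx => ?_
      have : g x = 0 := hgM x (by
        simp only [Finset.mem_Ico] at hx hnx
        omega)
      rw [this, mul_zero]
    have e2 : ∑ n ∈ Finset.Ico 1 (B - c), g n = ∑ n ∈ Finset.Ico 1 B, g n := by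
      refine Finset.sum_subset hsub fun x hx hnx => ?_
      exact hgM x (by
        simp only [Finset.mem_Ico] at hx hnx
        omega)
    calc ∑ m ∈ Finset.Ico 1 B, w m * g (m - c)
        = ∑ m ∈ Finset.Ico (c + 1) B, w m * g (m - c) := by rw [← h1, h2, zero_add]
      _ = ∑ n ∈ Finset.Ico 1 (B - c), (χ * n * g n + w c * g n) := by
          rw [h3]; exact Finset.sum_congr rfl fun n _ => h4 n
      _ = (∑ n ∈ Finset.Ico 1 (B - c), χ * n * g n)
            + w c * ∑ n ∈ Finset.Ico 1 (B - c), g n := by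
          rw [Finset.sum_add_distrib, Finset.mul_sum]
      _ = (∑ n ∈ Finset.Ico 1 B, χ * n * g n) + w c := by
          rw [e1, e2, hGsum1, mul_one]
  have hcolsum : ∀ j : Fin r, ∑ m ∈ Finset.Ico (kr + 1) B, w m * g (m - k j)
      = (∑ m ∈ Finset.Ico 1 B, χ * m * g m) + w (k j)
        - ∑ i : Fin r, w (k i) * g (k i - k j) := by
    intro j
    have h := hsplit (fun m => w m * g (m - k j))
      (fun m hm2 hm3 => by show w m * g (m - k j) = 0; rw [hG2 m hm2 hm3 j, mul_zero])
    rw [hreindex j] at h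
    linarith
  have hlam1' : lam1 = (∑ i : Fin r, w (k i) * f (k i))
      + (∑ m ∈ Finset.Ico (kr + 1) B, w m * f m)
      + ∑ m ∈ Finset.Ico 1 B, χ * m * g m := by
    have h := hsplit (fun m => w m * f m)
      (fun m hm2 hm3 => by show w m * f m = 0; rw [hF m hm2 hm3, mul_zero])
    rw [hlam1, Finset.sum_add_distrib, h]
  -- main determinant formula
  have main : ∀ lam : ℝ,
      (A - lam • (1 : Matrix (Fin (r + 1)) (Fin (r + 1)) ℝ)).det
        = (lam1 - lam) * ∏ i : Fin r, (w (k i) * (g 0 - 1) - lam) := by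
    intro lam
    set X : Matrix (Fin (r + 1)) (Fin (r + 1)) ℝ := A - lam • 1 with hXdef
    have hXapp : ∀ i j, X i j = A i j - if i = j then lam else 0 := by
      intro i j
      simp only [hXdef, Matrix.sub_apply, Matrix.smul_apply, Matrix.one_apply, smul_eq_mul,
        mul_ite, mul_one, mul_zero]
    set wv : Fin (r + 1) → ℝ := fun i => if h : (i : ℕ) < r then w (k ⟨i, h⟩) else 0 with hwv
    have hwvlast : wv (Fin.last r) = 0 := by
      simp only [hwv, Fin.val_last, lt_irrefl, dif_neg, not_false_iff]
    have hwvcast : ∀ b : Fin r, wv (Fin.castSucc b) = w (k b) := by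
      intro b
      simp only [hwv, Fin.coe_castSucc, b.isLt, dif_pos, Fin.eta]
    set eM : Matrix (Fin (r + 1)) (Fin (r + 1)) ℝ :=
      Matrix.of fun i j => if (i : ℕ) < r then 0 else wv j with heM
    have hne_last : ∀ b : Fin (r + 1), b ≠ Fin.last r → (b : ℕ) < r := by
      intro b hb
      have h1 := b.isLt
      have h2 : (b : ℕ) ≠ r := fun h => hb (Fin.ext (by simpa using h))
      omega
    have hlast_not : ¬ ((Fin.last r : Fin (r + 1)) : ℕ) < r := by
      simp
    have heMapp : ∀ (Y : Matrix (Fin (r + 1)) (Fin (r + 1)) ℝ) i j,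
        (Y * eM) i j = Y i (Fin.last r) * wv j := by
      intro Y i j
      rw [Matrix.mul_apply]
      rw [Finset.sum_eq_single (Fin.last r)]
      · simp only [heM, Matrix.of_apply, if_neg hlast_not]
      · intro b _ hb
        simp only [heM, Matrix.of_apply, if_pos (hne_last b hb), mul_zero]
      · intro h
        exact absurd (Finset.mem_univ _) h
    have heMapp' : ∀ (Y : Matrix (Fin (r + 1)) (Fin (r + 1)) ℝ) i j,
        (eM * Y) i j = if (i : ℕ) < r then 0 else ∑ b : Fin r, w (k b) * Y (Fin.castSucc b) j := by
      intro Y i j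
      rw [Matrix.mul_apply]
      by_cases hi : (i : ℕ) < r
      · simp only [heM, Matrix.of_apply, if_pos hi, zero_mul, Finset.sum_const_zero]
      · simp only [heM, Matrix.of_apply, if_neg hi]
        rw [Fin.sum_univ_castSucc, hwvlast, zero_mul, add_zero]
        exact Finset.sum_congr rfl fun b _ => by rw [hwvcast]
    set mE : Matrix (Fin (r + 1)) (Fin (r + 1)) ℝ := 1 - eM with hmE
    set mF : Matrix (Fin (r + 1)) (Fin (r + 1)) ℝ := 1 + eM with hmF
    set Y : Matrix (Fin (r + 1)) (Fin (r + 1)) ℝ := X * mE with hYdef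
    have hY : ∀ i j, Y i j = X i j - X i (Fin.last r) * wv j := by
      intro i j
      rw [hYdef, hmE, Matrix.mul_sub, Matrix.mul_one, Matrix.sub_apply, heMapp]
    have hXlastcol : ∀ (i : Fin (r + 1)) (hi : (i : ℕ) < r),
        X i (Fin.last r) = f (k ⟨i, hi⟩) := by
      intro i hi
      rw [hXapp, hA]
      have hne : i ≠ Fin.last r := fun h => by
        rw [h] at hi; exact hlast_not hi
      rw [if_neg hne, dif_pos hi, dif_neg hlast_not, sub_zero]
    have hXll : X (Fin.last r) (Fin.last r)
        = (∑ m ∈ Finset.Ico (kr + 1) B, w m * f m)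
          + (∑ m ∈ Finset.Ico 1 B, χ * m * g m) - lam := by
      rw [hXapp, hA, if_pos rfl, dif_neg hlast_not, dif_neg hlast_not]
    -- values of Y on the top rows
    have hYtop : ∀ (b : Fin r) (j : Fin (r + 1)),
        Y (Fin.castSucc b) j =
          if hj : (j : ℕ) < r then
            w (k ⟨j, hj⟩) * g (k b - k ⟨j, hj⟩)
              - (if (b : ℕ) = (j : ℕ) then w (k ⟨j, hj⟩) + lam else 0)
          else f (k b) := by
      intro b j
      have hbi : ((Fin.castSucc b : Fin (r + 1)) : ℕ) < r := by
        simpa using b.isLt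
      have heta : (⟨((Fin.castSucc b : Fin (r + 1)) : ℕ), hbi⟩ : Fin r) = b :=
        Fin.ext (Fin.coe_castSucc b)
      rw [hY, hXlastcol _ hbi, heta]
      by_cases hj : (j : ℕ) < r
      · have hwvj : wv j = w (k ⟨(j : ℕ), hj⟩) := by
          simp only [hwv]; rw [dif_pos hj]
        rw [dif_pos hj, hXapp, hA, dif_pos hbi, dif_pos hj, heta, hwvj]
        have hcast : (Fin.castSucc b = j) ↔ ((b : ℕ) = (j : ℕ)) := by
          rw [Fin.ext_iff, Fin.coe_castSucc]
        simp only [Fin.coe_castSucc, hcast]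
        rcases lt_trichotomy ((b : ℕ)) ((j : ℕ)) with h | h | h
        · have hne : ¬ ((b : ℕ) = (j : ℕ)) := by omega
          have hgz : k b - k ⟨(j : ℕ), hj⟩ = 0 := by
            have : k b < k ⟨(j : ℕ), hj⟩ := hkmono (by exact h)
            omega
          rw [if_pos h, if_neg hne, if_neg hne, hgz, hg0]
          ring
        · have hje : (⟨(j : ℕ), hj⟩ : Fin r) = b := Fin.ext h.symm
          rw [hje, if_neg (by omega : ¬ ((b : ℕ) < (j : ℕ))), if_pos h, if_pos h, if_pos h,
            Nat.sub_self, hg0]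
          ring
        · have hne : ¬ ((b : ℕ) = (j : ℕ)) := by omega
          rw [if_neg (by omega : ¬ ((b : ℕ) < (j : ℕ))), if_neg hne, if_neg hne, if_neg hne]
          ring
      · rw [dif_neg hj]
        have hjl : j = Fin.last r := by
          apply Fin.ext
          have := j.isLt
          simp only [Fin.val_last]
          omega
        subst hjl
        rw [hwvlast, mul_zero, sub_zero, hXlastcol _ hbi, heta]
    set D : Matrix (Fin (r + 1)) (Fin (r + 1)) ℝ := mF * Y with hDdef
    have hDapp : ∀ i j, D i j = Y i j
        + (if (i : ℕ) < r then 0 else ∑ b : Fin r, w (k b) * Y (Fin.castSucc b) j) := by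
      intro i j
      rw [hDdef, hmF, Matrix.add_mul, Matrix.one_mul, Matrix.add_apply, heMapp']
    have hDtop : ∀ (b : Fin r) (j : Fin (r + 1)), D (Fin.castSucc b) j = Y (Fin.castSucc b) j := by
      intro b j
      rw [hDapp, if_pos (by simpa using b.isLt), add_zero]
    -- the last row of D
    have hDlast : ∀ j : Fin (r + 1),
        D (Fin.last r) j = if (j : ℕ) < r then 0 else lam1 - lam := by
      intro j
      rw [hDapp, if_neg hlast_not]
      by_cases hj : (j : ℕ) < r
      · rw [if_pos hj]
        set j' : Fin r := ⟨(j : ℕ), hj⟩ with hj'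
        -- value of Y at (last, j)
        have hAlastj : A (Fin.last r) j
            = w (k j') * ∑ m ∈ Finset.Ico (kr + 1) B, w m * (f m + g (m - k j')) := by
          rw [hA, dif_neg hlast_not, dif_pos hj]
        have hjne : Fin.last r ≠ j := fun h => by
          rw [← h] at hj; exact hlast_not hj
        have hwvj : wv j = w (k j') := by
          simp only [hwv, dif_pos hj]
          rfl
        have hYlastj : Y (Fin.last r) j
            = w (k j') * ((∑ m ∈ Finset.Ico (kr + 1) B, w m * f m)
                + ((∑ m ∈ Finset.Ico 1 B, χ * m * g m) + w (k j')
                    - ∑ i : Fin r, w (k i) * g (k i - k j')))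
              - ((∑ m ∈ Finset.Ico (kr + 1) B, w m * f m)
                  + (∑ m ∈ Finset.Ico 1 B, χ * m * g m) - lam) * w (k j') := by
          rw [hY, hXll, hXapp, if_neg hjne, sub_zero, hAlastj, hwvj]
          congr 2
          rw [← hcolsum j']
          rw [← Finset.sum_add_distrib]
          exact Finset.sum_congr rfl fun m _ => by ring
        have hsum : ∑ b : Fin r, w (k b) * Y (Fin.castSucc b) j
            = w (k j') * (∑ b : Fin r, w (k b) * g (k b - k j'))
              - w (k j') * (w (k j') + lam) := by
          have step : ∀ b : Fin r, w (k b) * Y (Fin.castSucc b) j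
              = w (k b) * (w (k j') * g (k b - k j'))
                - (if b = j' then w (k j') * (w (k j') + lam) else 0) := by
            intro b
            rw [hYtop b j, dif_pos hj]
            by_cases hb : (b : ℕ) = (j : ℕ)
            · have hbj : b = j' := Fin.ext hb
              rw [if_pos hb, if_pos hbj, hbj]
              ring
            · rw [if_neg hb, if_neg (fun hh => hb (by rw [hh]))]
              ring
          rw [Finset.sum_congr rfl fun b _ => step b, Finset.sum_sub_distrib]
          congr 1
          · rw [Finset.mul_sum]
            exact Finset.sum_congr rfl fun b _ => by ring
          · rw [Finset.sum_ite_eq' Finset.univ j' (fun _ => w (k j') * (w (k j') + lam))]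
            rw [if_pos (Finset.mem_univ _)]
        rw [hYlastj, hsum]
        ring
      · rw [if_neg hj]
        have hjl : j = Fin.last r := by
          apply Fin.ext
          have := j.isLt
          simp only [Fin.val_last]
          omega
        subst hjl
        have hYll : Y (Fin.last r) (Fin.last r)
            = (∑ m ∈ Finset.Ico (kr + 1) B, w m * f m)
              + (∑ m ∈ Finset.Ico 1 B, χ * m * g m) - lam := by
          rw [hY, hwvlast, mul_zero, sub_zero, hXll]
        have hsum : ∑ b : Fin r, w (k b) * Y (Fin.castSucc b) (Fin.last r)
            = ∑ b : Fin r, w (k b) * f (k b) :=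
          Finset.sum_congr rfl fun b _ => by
            rw [hYtop b (Fin.last r), dif_neg hlast_not]
        rw [hYll, hsum, hlam1']
        ring
    -- determinants of the elementary matrices
    have hdiagE : ∀ i : Fin (r + 1), mE i i = 1 := by
      intro i
      rw [hmE, Matrix.sub_apply, Matrix.one_apply_eq, heM]
      by_cases hi : (i : ℕ) < r
      · simp [hi]
      · have : i = Fin.last r := by
          apply Fin.ext; have := i.isLt; simp only [Fin.val_last]; omega
        simp [hi, this, hwvlast]
    have hdiagF : ∀ i : Fin (r + 1), mF i i = 1 := by
      intro i
      rw [hmF, Matrix.add_apply, Matrix.one_apply_eq, heM]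
      by_cases hi : (i : ℕ) < r
      · simp [hi]
      · have : i = Fin.last r := by
          apply Fin.ext; have := i.isLt; simp only [Fin.val_last]; omega
        simp [hi, this, hwvlast]
    have hoffE : ∀ i j : Fin (r + 1), i < j → mE i j = 0 := by
      intro i j hij
      have hi : (i : ℕ) < r := by
        have h1 := j.isLt
        have h2 : (i : ℕ) < (j : ℕ) := hij
        omega
      rw [hmE, Matrix.sub_apply, Matrix.one_apply_ne (ne_of_lt hij), heM]
      simp [hi]
    have hoffF : ∀ i j : Fin (r + 1), i < j → mF i j = 0 := by
      intro i j hij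
      have hi : (i : ℕ) < r := by
        have h1 := j.isLt
        have h2 : (i : ℕ) < (j : ℕ) := hij
        omega
      rw [hmF, Matrix.add_apply, Matrix.one_apply_ne (ne_of_lt hij), heM]
      simp [hi]
    have hdetE : mE.det = 1 := by
      rw [Matrix.det_of_lowerTriangular mE (fun i j hij => hoffE i j hij)]
      exact Finset.prod_eq_one fun i _ => hdiagE i
    have hdetF : mF.det = 1 := by
      rw [Matrix.det_of_lowerTriangular mF (fun i j hij => hoffF i j hij)]
      exact Finset.prod_eq_one fun i _ => hdiagF i
    have hdetX : X.det = D.det := by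
      rw [hDdef, Matrix.det_mul, hYdef, Matrix.det_mul, hdetE, hdetF, mul_one, one_mul]
    -- expand det D along the last row
    rw [hdetX, Matrix.det_succ_row D (Fin.last r)]
    rw [Finset.sum_eq_single (Fin.last r)]
    · rw [hDlast (Fin.last r), if_neg hlast_not]
      have hpow : ((-1 : ℝ)) ^ ((Fin.last r : Fin (r + 1)) + (Fin.last r : Fin (r + 1)) : ℕ)
          = 1 := Even.neg_one_pow ⟨r, by simp⟩
      rw [hpow, one_mul]
      congr 1
      -- the minor is lower triangular
      have hminor : ∀ i j : Fin r,
          (D.submatrix (Fin.last r).succAbove (Fin.last r).succAbove) i j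
            = w (k j) * g (k i - k j) - (if i = j then w (k j) + lam else 0) := by
        intro i j
        rw [Matrix.submatrix_apply, Fin.succAbove_last, hDtop, hYtop]
        have hj : ((Fin.castSucc j : Fin (r + 1)) : ℕ) < r := by simpa using j.isLt
        rw [dif_pos hj]
        have heta : (⟨((Fin.castSucc j : Fin (r + 1)) : ℕ), hj⟩ : Fin r) = j :=
          Fin.ext (Fin.coe_castSucc j)
        rw [heta]
        congr 1
        by_cases hij : i = j
        · rw [if_pos hij, if_pos (by simp [hij])]
        · rw [if_neg hij, if_neg (fun hh => hij (Fin.ext (by simpa using hh)))]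
      have htri : (D.submatrix (Fin.last r).succAbove (Fin.last r).succAbove).BlockTriangular
          OrderDual.toDual := by
        intro i j hij
        have hij' : i < j := hij
        rw [hminor i j]
        have hgz : k i - k j = 0 := by
          have : k i < k j := hkmono hij'
          omega
        rw [hgz, hg0, if_neg (ne_of_lt hij')]
        ring
      rw [Matrix.det_of_lowerTriangular _ htri]
      refine Finset.prod_congr rfl fun i _ => ?_
      rw [hminor i i, if_pos rfl, Nat.sub_self, hg0]
      ring
    · intro j _ hj
      rw [hDlast j, if_pos (hne_last j hj), mul_zero, zero_mul]
    · intro h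
      exact absurd (Finset.mem_univ _) h
  refine ⟨main, fun lam => ?_⟩
  rw [main lam, mul_eq_zero, Finset.prod_eq_zero_iff]
  constructor
  · rintro (h | ⟨i, _, h⟩)
    · exact Or.inl (by linarith)
    · exact Or.inr ⟨i, by linarith⟩
  · rintro (h | ⟨i, h⟩)
    · exact Or.inl (by linarith)
    · exact Or.inr ⟨i, Finset.mem_univ i, by linarith⟩
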